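/- Let 0<β<1, let f be integrable on (0,∞) and let g be measurable on (0,∞) with ∫₀^∞ |g(v)| K₀(βv) dv < ∞. Then the function x ↦ (f⋆g)(x) is continuous and bounded on (0,∞) and tends to 0 as x → ∞. -/

import Mathlib

open MeasureTheory Real Set Filter

/-- The kernel function φ(x,u,v). -/
noncomputable def phiKer (x u v : ℝ) : ℝ :=
  Real.exp (-v * Real.cosh (x + u - 1)) + Real.exp (-v * Real.cosh (x - u + 1))
    - Real.exp (-v * Real.cosh (x + u + 1)) - Real.exp (-v * Real.cosh (x - u - 1))

/-- The modified Bessel function of the second kind of order zero. -/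
noncomputable def K0 (v : ℝ) : ℝ := ∫ t in Set.Ioi (0 : ℝ), Real.exp (-v * Real.cosh t)

/-- The trigonometric-weighted generalized convolution (f ⋆ g). -/
noncomputable def gconv (f g : ℝ → ℝ) (x : ℝ) : ℝ :=
  (1 / 4) * ∫ v in Set.Ioi (0 : ℝ), ∫ u in Set.Ioi (0 : ℝ), phiKer x u v * f u * g v

/-- Fourier cosine transform. -/
noncomputable def Fc (f : ℝ → ℝ) (y : ℝ) : ℝ :=
  Real.sqrt (2 / Real.pi) * ∫ x in Set.Ioi (0 : ℝ), f x * Real.cos (x * y)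

/-- Fourier sine transform. -/
noncomputable def Fs (f : ℝ → ℝ) (y : ℝ) : ℝ :=
  Real.sqrt (2 / Real.pi) * ∫ x in Set.Ioi (0 : ℝ), f x * Real.sin (x * y)

/-- Modified Bessel function K_{iy}(x). -/
noncomputable def Kiy (y x : ℝ) : ℝ :=
  ∫ u in Set.Ioi (0 : ℝ), Real.exp (-x * Real.cosh u) * Real.cos (y * u)

/-- Kontorovich–Lebedev transform. -/
noncomputable def KL (g : ℝ → ℝ) (y : ℝ) : ℝ := ∫ x in Set.Ioi (0 : ℝ), Kiy y x * g x

/-- Fourier cosine convolution. -/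
noncomputable def fcConv (f g : ℝ → ℝ) (x : ℝ) : ℝ :=
  (1 / Real.sqrt (2 * Real.pi)) * ∫ u in Set.Ioi (0 : ℝ), f u * (g |x - u| + g (x + u))

/-- Fourier sine–cosine generalized convolution. -/
noncomputable def fscConv (f g : ℝ → ℝ) (x : ℝ) : ℝ :=
  (1 / Real.sqrt (2 * Real.pi)) * ∫ u in Set.Ioi (0 : ℝ), f u * (g |x - u| - g (x + u))



lemma cosh_ge_half (t : ℝ) : t / 2 ≤ Real.cosh t := by
  nlinarith [Real.add_one_le_exp t, Real.exp_pos (-t), Real.cosh_eq t]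

lemma expcosh_integrable {a : ℝ} (ha : 0 < a) :
    IntegrableOn (fun t => Real.exp (-a * Real.cosh t)) (Set.Ioi (0:ℝ)) := by
  apply Integrable.mono' (exp_neg_integrableOn_Ioi 0 (show 0 < a/2 by linarith))
  · exact ((Real.continuous_exp.comp
      ((continuous_const.mul Real.continuous_cosh))).aestronglyMeasurable).restrict
  · filter_upwards with t
    rw [Real.norm_eq_abs, abs_of_pos (Real.exp_pos _)]
    apply Real.exp_le_exp.2
    have := cosh_ge_half t
    nlinarith

lemma K0_lower {β δ v : ℝ} (hβ : 0 < β) (hδ : 0 < δ) (hc : Real.cosh δ ≤ 1 / β)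
    (hv : 0 < v) : δ * Real.exp (-v) ≤ K0 (β * v) := by
  have ha : 0 < β * v := mul_pos hβ hv
  have hint : IntegrableOn (fun t => Real.exp (-(β*v) * Real.cosh t)) (Set.Ioi (0:ℝ)) :=
    expcosh_integrable ha
  have h1 : ∫ t in Set.Ioc (0:ℝ) δ, Real.exp (-(β*v) * Real.cosh t)
      ≤ ∫ t in Set.Ioi (0:ℝ), Real.exp (-(β*v) * Real.cosh t) := by
    apply setIntegral_mono_set hint
    · filter_upwards with t using (Real.exp_pos _).le
    · exact HasSubset.Subset.eventuallyLE Set.Ioc_subset_Ioi_self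
  have h2 : ∫ t in Set.Ioc (0:ℝ) δ, Real.exp (-v)
      ≤ ∫ t in Set.Ioc (0:ℝ) δ, Real.exp (-(β*v) * Real.cosh t) := by
    apply setIntegral_mono_on
    · exact integrableOn_const measure_Ioc_lt_top.ne
    · exact hint.mono_set Set.Ioc_subset_Ioi_self
    · exact measurableSet_Ioc
    · intro t ht
      apply Real.exp_le_exp.2
      have hct : Real.cosh t ≤ Real.cosh δ := by
        rw [Real.cosh_le_cosh]
        rw [abs_of_pos ht.1, abs_of_pos hδ]
        exact ht.2
      have : β * Real.cosh t ≤ 1 := by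
        calc β * Real.cosh t ≤ β * (1/β) := by nlinarith
        _ = 1 := by field_simp
      nlinarith
  have h3 : ∫ t in Set.Ioc (0:ℝ) δ, Real.exp (-v) = δ * Real.exp (-v) := by
    simp [Real.volume_Ioc, ENNReal.toReal_ofReal hδ.le, hδ.le]
  rw [K0]
  calc δ * Real.exp (-v) = ∫ t in Set.Ioc (0:ℝ) δ, Real.exp (-v) := h3.symm
    _ ≤ _ := le_trans h2 h1

lemma phi_abs_le (x u : ℝ) {v : ℝ} (hv : 0 < v) : |phiKer x u v| ≤ 4 * Real.exp (-v) := by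
  have key : ∀ w : ℝ, Real.exp (-v * Real.cosh w) ≤ Real.exp (-v) := by
    intro w
    apply Real.exp_le_exp.2
    nlinarith [Real.one_le_cosh w]
  have p1 := Real.exp_pos (-v * Real.cosh (x + u - 1))
  have p2 := Real.exp_pos (-v * Real.cosh (x - u + 1))
  have p3 := Real.exp_pos (-v * Real.cosh (x + u + 1))
  have p4 := Real.exp_pos (-v * Real.cosh (x - u - 1))
  rw [phiKer, abs_le]
  constructor <;> nlinarith [key (x+u-1), key (x-u+1), key (x+u+1), key (x-u-1)]

lemma cosh_tendsto : Tendsto Real.cosh atTop atTop :=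
  tendsto_atTop_mono cosh_ge_half (tendsto_id.atTop_div_const (by norm_num))

lemma exp_term_tendsto {v : ℝ} (hv : 0 < v) (c : ℝ) :
    Tendsto (fun x => Real.exp (-v * Real.cosh (x + c))) atTop (nhds 0) := by
  have h1 : Tendsto (fun x : ℝ => x + c) atTop atTop := tendsto_atTop_add_const_right _ c tendsto_id
  have h2 : Tendsto (fun x => Real.cosh (x + c)) atTop atTop := cosh_tendsto.comp h1
  have h3 : Tendsto (fun x => -v * Real.cosh (x + c)) atTop atBot := by
    exact Tendsto.const_mul_atTop_of_neg (by linarith) h2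
  exact Real.tendsto_exp_atBot.comp h3

lemma phi_tendsto (u : ℝ) {v : ℝ} (hv : 0 < v) :
    Tendsto (fun x => phiKer x u v) atTop (nhds 0) := by
  have h := (((exp_term_tendsto hv (u-1)).add (exp_term_tendsto hv (1-u))).sub
    (exp_term_tendsto hv (u+1))).sub (exp_term_tendsto hv (-u-1))
  have heq : (fun x => Real.exp (-v * Real.cosh (x + (u-1))) + Real.exp (-v * Real.cosh (x + (1-u)))
      - Real.exp (-v * Real.cosh (x + (u+1))) - Real.exp (-v * Real.cosh (x + (-u-1))))
      = fun x => phiKer x u v := by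
    funext x; rw [phiKer]; ring_nf
  rw [heq] at h
  simpa using h

theorem gconv_C0 (β : ℝ) (hβ : β ∈ Set.Ioo (0 : ℝ) 1) (f g : ℝ → ℝ)
    (hf : MeasureTheory.IntegrableOn f (Set.Ioi 0))
    (hg : Measurable g)
    (hgK : MeasureTheory.IntegrableOn (fun v => |g v| * K0 (β * v)) (Set.Ioi 0)) :
    ContinuousOn (gconv f g) (Set.Ioi 0) ∧
    (∃ M : ℝ, ∀ x ∈ Set.Ioi (0 : ℝ), |gconv f g x| ≤ M) ∧
    Filter.Tendsto (gconv f g) Filter.atTop (nhds 0) := by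
  obtain ⟨hβ0, hβ1⟩ := hβ
  -- find δ with cosh δ < 1/β
  obtain ⟨δ, hδc, hδ0⟩ : ∃ δ : ℝ, Real.cosh δ < 1/β ∧ δ ∈ Set.Ioi (0:ℝ) := by
    have h1 : (1:ℝ) < 1/β := (one_lt_div hβ0).2 hβ1
    have hev : ∀ᶠ t in nhds (0:ℝ), Real.cosh t < 1/β :=
      (Real.continuous_cosh.continuousAt).eventually_lt continuousAt_const (by simpa using h1)
    exact ((eventually_nhdsWithin_of_eventually_nhds hev).and
      (eventually_mem_nhdsWithin (s := Set.Ioi (0:ℝ)))).exists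
  -- integrability of v ↦ e^{-v} |g v|
  have hgI : IntegrableOn (fun v => Real.exp (-v) * |g v|) (Set.Ioi 0) := by
    apply Integrable.mono' (hgK.const_mul (1/δ))
    · exact ((Real.measurable_exp.comp measurable_neg).mul hg.abs).aestronglyMeasurable
    · filter_upwards [ae_restrict_mem measurableSet_Ioi] with v hv
      have hK := K0_lower hβ0 hδ0 hδc.le hv
      rw [Real.norm_eq_abs, abs_of_nonneg (by positivity)]
      have h2 : |g v| * (δ * Real.exp (-v)) ≤ |g v| * K0 (β * v) :=
        mul_le_mul_of_nonneg_left hK (abs_nonneg _)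
      rw [div_mul_eq_mul_div, le_div_iff₀ hδ0]
      nlinarith [abs_nonneg (g v)]
  set μ2 := (volume.restrict (Set.Ioi (0:ℝ))).prod (volume.restrict (Set.Ioi (0:ℝ))) with hμ2
  have hB : Integrable (fun p : ℝ × ℝ => (4 * (Real.exp (-p.1) * |g p.1|)) * |f p.2|) μ2 :=
    (hgI.const_mul 4).mul_prod hf.abs
  have hmeas : ∀ x : ℝ, AEStronglyMeasurable
      (fun p : ℝ × ℝ => phiKer x p.2 p.1 * f p.2 * g p.1) μ2 := by
    intro x
    have h1 : Continuous fun p : ℝ × ℝ => phiKer x p.2 p.1 := by unfold phiKer; fun_prop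
    exact (h1.aestronglyMeasurable.mul hf.1.comp_snd).mul (hg.comp measurable_fst).aestronglyMeasurable
  have hmem : ∀ᵐ p ∂μ2, p ∈ Set.Ioi (0:ℝ) ×ˢ Set.Ioi (0:ℝ) := by
    rw [hμ2, Measure.prod_restrict]
    exact ae_restrict_mem (measurableSet_Ioi.prod measurableSet_Ioi)
  have hbound : ∀ x : ℝ, ∀ᵐ p ∂μ2, ‖phiKer x p.2 p.1 * f p.2 * g p.1‖
      ≤ (4 * (Real.exp (-p.1) * |g p.1|)) * |f p.2| := by
    intro x
    filter_upwards [hmem] with p hp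
    have hv : (0:ℝ) < p.1 := hp.1
    rw [Real.norm_eq_abs, abs_mul, abs_mul]
    calc |phiKer x p.2 p.1| * |f p.2| * |g p.1|
        ≤ (4 * Real.exp (-p.1)) * |f p.2| * |g p.1| := by
          gcongr
          exact phi_abs_le x p.2 hv
      _ = (4 * (Real.exp (-p.1) * |g p.1|)) * |f p.2| := by ring
  have hint : ∀ x : ℝ, Integrable (fun p : ℝ×ℝ => phiKer x p.2 p.1 * f p.2 * g p.1) μ2 :=
    fun x => hB.mono' (hmeas x) (hbound x)
  have hconv : ∀ x : ℝ, gconv f g x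
      = (1/4) * ∫ p : ℝ×ℝ, phiKer x p.2 p.1 * f p.2 * g p.1 ∂μ2 := by
    intro x
    rw [gconv]
    congr 1
    exact integral_integral (f := fun v u => phiKer x u v * f u * g v) (hint x)
  refine ⟨?_, ?_, ?_⟩
  · apply Continuous.continuousOn
    have hc : Continuous fun x => ∫ p : ℝ×ℝ, phiKer x p.2 p.1 * f p.2 * g p.1 ∂μ2 := by
      apply continuous_of_dominated hmeas hbound hB
      filter_upwards with p
      unfold phiKer; fun_prop
    have : gconv f g = fun x => (1/4) * ∫ p : ℝ×ℝ, phiKer x p.2 p.1 * f p.2 * g p.1 ∂μ2 :=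
      funext hconv
    rw [this]
    exact continuous_const.mul hc
  · refine ⟨(1/4) * ∫ p : ℝ×ℝ, (4 * (Real.exp (-p.1) * |g p.1|)) * |f p.2| ∂μ2, fun x _ => ?_⟩
    rw [hconv x, abs_mul, abs_of_nonneg (by norm_num : (0:ℝ) ≤ 1/4)]
    have := norm_integral_le_of_norm_le hB (hbound x)
    rw [Real.norm_eq_abs] at this
    linarith
  · have hlim : ∀ᵐ p ∂μ2, Tendsto (fun x => phiKer x p.2 p.1 * f p.2 * g p.1) atTop
        (nhds ((fun _ : ℝ×ℝ => (0:ℝ)) p)) := by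
      filter_upwards [hmem] with p hp
      have h := ((phi_tendsto p.2 hp.1).mul_const (f p.2)).mul_const (g p.1)
      simpa using h
    have hT := tendsto_integral_filter_of_dominated_convergence
      (μ := μ2) (F := fun x (p : ℝ×ℝ) => phiKer x p.2 p.1 * f p.2 * g p.1)
      (f := fun _ => (0:ℝ)) _ (Filter.Eventually.of_forall hmeas)
      (Filter.Eventually.of_forall hbound) hB hlim
    simp only [integral_zero] at hT
    have : gconv f g = fun x => (1/4) * ∫ p : ℝ×ℝ, phiKer x p.2 p.1 * f p.2 * g p.1 ∂μ2 :=
      funext hconv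
    rw [this]
    simpa using hT.const_mul (1/4 : ℝ)
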